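/- There exists a constant C > 0 such that for every η ≥ 1, | ∫_ℝ ω'(x − η) (1 − ω(x))³ dx − 8 e^{−√2 η} | ≤ C e^{−2√2 η}, where ω(x) = tanh(x/√2). -/

import Mathlib

open Real MeasureTheory Filter Set Topology

/-- The Allen–Cahn heteroclinic `ω(x) = tanh (x/√2)`. -/
noncomputable def ω (x : ℝ) : ℝ := Real.tanh (x / Real.sqrt 2)


lemma my_ftc {F f : ℝ → ℝ} (hd : ∀ x, HasDerivAt F (f x) x)
    (hpos : ∀ x, 0 ≤ f x) {A B : ℝ}
    (hbot : Tendsto F atBot (𝓝 A)) (htop : Tendsto F atTop (𝓝 B)) :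
    Integrable f ∧ ∫ x, f x = B - A := by
  have hIoi : IntegrableOn f (Ioi 0) :=
    integrableOn_Ioi_deriv_of_nonneg' (fun x _ => hd x) (fun x _ => hpos x) htop
  have hneg : ∀ x : ℝ, HasDerivAt (fun y => -F (-y)) (f (-x)) x := by
    intro x
    have := ((hd (-x)).comp x ((hasDerivAt_id x).neg)).neg
    exact this.congr_deriv (by simp)
  have htop' : Tendsto (fun y : ℝ => -F (-y)) atTop (𝓝 (-A)) :=
    (hbot.comp tendsto_neg_atTop_atBot).neg
  have hIoi' : IntegrableOn (fun x => f (-x)) (Ioi 0) :=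
    integrableOn_Ioi_deriv_of_nonneg' (fun x _ => hneg x) (fun x _ => hpos _) htop'
  have hIio : IntegrableOn f (Iio 0) := by
    have h := (MeasurePreserving.integrableOn_comp_preimage
      (Measure.measurePreserving_neg (volume : Measure ℝ))
      (Homeomorph.neg ℝ).measurableEmbedding (f := f) (s := Iio (0:ℝ))).1
    have hpre : (Neg.neg : ℝ → ℝ) ⁻¹' (Iio 0) = Ioi 0 := by
      ext x; simp
    apply h
    rw [hpre]
    exact hIoi'
  have hIic : IntegrableOn f (Iic 0) := by
    rwa [integrableOn_Iic_iff_integrableOn_Iio]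
  have hint : Integrable f := by
    rw [← integrableOn_univ, ← Set.Iic_union_Ioi (a := (0:ℝ))]
    exact hIic.union hIoi
  refine ⟨hint, ?_⟩
  have e1 : ∫ x in Iic (0:ℝ), f x = F 0 - A :=
    integral_Iic_of_hasDerivAt_of_tendsto' (fun x _ => hd x) hIic hbot
  have e2 : ∫ x in Ioi (0:ℝ), f x = B - F 0 :=
    integral_Ioi_of_hasDerivAt_of_tendsto' (fun x _ => hd x) hIoi htop
  rw [← intervalIntegral.integral_Iic_add_Ioi (b := (0:ℝ)) hIic hIoi, e1, e2]
  ring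


lemma sqrt2_pos : (0:ℝ) < Real.sqrt 2 := Real.sqrt_pos.2 (by norm_num)

lemma sqrt2_mul (x : ℝ) : Real.sqrt 2 * x = x / Real.sqrt 2 + x / Real.sqrt 2 := by
  have h : Real.sqrt 2 * Real.sqrt 2 = 2 := Real.mul_self_sqrt (by norm_num)
  field_simp
  linear_combination x * h

lemma omega_eq (x : ℝ) : ω x = 1 - 2 / (Real.exp (Real.sqrt 2 * x) + 1) := by
  have ht : (0:ℝ) < Real.exp (x / Real.sqrt 2) := Real.exp_pos _
  have h2 : Real.exp (Real.sqrt 2 * x)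
      = Real.exp (x / Real.sqrt 2) * Real.exp (x / Real.sqrt 2) := by
    rw [sqrt2_mul, Real.exp_add]
  rw [ω, Real.tanh_eq_sinh_div_cosh, Real.sinh_eq, Real.cosh_eq, h2, Real.exp_neg]
  set t := Real.exp (x / Real.sqrt 2)
  have h3 : t + t⁻¹ > 0 := by positivity
  have h4 : t * t + 1 > 0 := by positivity
  field_simp
  ring

lemma exp_hasDeriv (s x : ℝ) :
    HasDerivAt (fun y => Real.exp (s * y)) (s * Real.exp (s * x)) x := by
  have := (Real.hasDerivAt_exp (s * x)).comp x ((hasDerivAt_id x).const_mul s)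
  exact this.congr_deriv (by simp [mul_comm])

lemma omega_hasDeriv (y : ℝ) :
    HasDerivAt ω (2 * Real.sqrt 2 * Real.exp (Real.sqrt 2 * y)
      / (Real.exp (Real.sqrt 2 * y) + 1) ^ 2) y := by
  set s := Real.sqrt 2
  have hne : Real.exp (s * y) + 1 ≠ 0 := by positivity
  have h1 : HasDerivAt (fun x => 1 - 2 * (Real.exp (s * x) + 1)⁻¹)
      (-(2 * (-(s * Real.exp (s * y)) / (Real.exp (s * y) + 1) ^ 2))) y := by
    exact (((exp_hasDeriv s y).add_const 1).inv hne).const_mul 2 |>.const_sub 1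
  have h2 : HasDerivAt (fun x => 1 - 2 * (Real.exp (s * x) + 1)⁻¹)
      (2 * s * Real.exp (s * y) / (Real.exp (s * y) + 1) ^ 2) y := by
    convert h1 using 1; field_simp
  exact h2.congr_of_eventuallyEq (Filter.Eventually.of_forall fun x => by
    rw [omega_eq x]; ring)

lemma exp_tendsto_bot : Tendsto (fun x : ℝ => Real.exp (Real.sqrt 2 * x)) atBot (𝓝 0) :=
  Real.tendsto_exp_atBot.comp (tendsto_id.const_mul_atBot sqrt2_pos)

lemma exp_tendsto_top : Tendsto (fun x : ℝ => Real.exp (Real.sqrt 2 * x)) atTop atTop :=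
  Real.tendsto_exp_atTop.comp (tendsto_id.const_mul_atTop sqrt2_pos)

lemma base1_integral :
    Integrable (fun x : ℝ => Real.exp (Real.sqrt 2 * x) / (Real.exp (Real.sqrt 2 * x) + 1) ^ 3)
    ∧ ∫ x : ℝ, Real.exp (Real.sqrt 2 * x) / (Real.exp (Real.sqrt 2 * x) + 1) ^ 3
      = 1 / (2 * Real.sqrt 2) := by
  set s := Real.sqrt 2
  have hs := sqrt2_pos
  have hd : ∀ x : ℝ, HasDerivAt
      (fun x => -(1 / (2 * s)) * ((Real.exp (s * x) + 1) ^ 2)⁻¹)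
      (Real.exp (s * x) / (Real.exp (s * x) + 1) ^ 3) x := by
    intro x
    have hne : Real.exp (s * x) + 1 ≠ 0 := by positivity
    have hne2 : (Real.exp (s * x) + 1) ^ 2 ≠ 0 := pow_ne_zero 2 hne
    have h1 := ((((exp_hasDeriv s x).add_const 1).pow 2).inv hne2).const_mul (-(1 / (2 * s)))
    refine h1.congr_deriv ?_
    have hs' : s ≠ 0 := ne_of_gt hs
    simp only [Pi.pow_apply]
    field_simp
    ring
  have hpos : ∀ x : ℝ, 0 ≤ Real.exp (s * x) / (Real.exp (s * x) + 1) ^ 3 := by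
    intro x; positivity
  have hbot : Tendsto (fun x => -(1 / (2 * s)) * ((Real.exp (s * x) + 1) ^ 2)⁻¹) atBot
      (𝓝 (-(1 / (2 * s)))) := by
    have := (((exp_tendsto_bot.add_const 1).pow 2).inv₀ (by norm_num)).const_mul (-(1 / (2 * s)))
    simpa using this
  have htop : Tendsto (fun x => -(1 / (2 * s)) * ((Real.exp (s * x) + 1) ^ 2)⁻¹) atTop
      (𝓝 0) := by
    have h2 : Tendsto (fun x : ℝ => (Real.exp (s * x) + 1) ^ 2) atTop atTop :=
      (tendsto_pow_atTop (two_ne_zero)).comp (tendsto_atTop_add_const_right _ 1 exp_tendsto_top)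
    have := (h2.inv_tendsto_atTop).const_mul (-(1 / (2 * s)))
    simpa using this
  have := my_ftc hd hpos hbot htop
  refine ⟨this.1, ?_⟩
  rw [this.2]
  ring

lemma base2_integral :
    Integrable (fun x : ℝ =>
      Real.exp (Real.sqrt 2 * x) ^ 2 / (Real.exp (Real.sqrt 2 * x) + 1) ^ 3)
    ∧ ∫ x : ℝ, Real.exp (Real.sqrt 2 * x) ^ 2 / (Real.exp (Real.sqrt 2 * x) + 1) ^ 3
      = 1 / (2 * Real.sqrt 2) := by
  set s := Real.sqrt 2
  have hs := sqrt2_pos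
  have hd : ∀ x : ℝ, HasDerivAt
      (fun x => (1 / s) * (-(Real.exp (s * x) + 1)⁻¹ + (1 / 2) * ((Real.exp (s * x) + 1) ^ 2)⁻¹))
      (Real.exp (s * x) ^ 2 / (Real.exp (s * x) + 1) ^ 3) x := by
    intro x
    have hne : Real.exp (s * x) + 1 ≠ 0 := by positivity
    have hne2 : (Real.exp (s * x) + 1) ^ 2 ≠ 0 := pow_ne_zero 2 hne
    have ha := (((exp_hasDeriv s x).add_const 1).inv hne).neg
    have hb := ((((exp_hasDeriv s x).add_const 1).pow 2).inv hne2).const_mul (1 / (2:ℝ))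
    have h1 := (ha.add hb).const_mul (1 / s)
    refine h1.congr_deriv ?_
    have hs' : s ≠ 0 := ne_of_gt hs
    simp only [Pi.pow_apply]
    field_simp
    ring
  have hpos : ∀ x : ℝ, 0 ≤ Real.exp (s * x) ^ 2 / (Real.exp (s * x) + 1) ^ 3 := by
    intro x; positivity
  have hbot : Tendsto
      (fun x => (1 / s) * (-(Real.exp (s * x) + 1)⁻¹ + (1 / 2) * ((Real.exp (s * x) + 1) ^ 2)⁻¹))
      atBot (𝓝 (-(1 / (2 * s)))) := by
    have h1 := ((exp_tendsto_bot.add_const 1).inv₀ (by norm_num)).neg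
    have h2 := (((exp_tendsto_bot.add_const 1).pow 2).inv₀ (by norm_num)).const_mul (1 / (2:ℝ))
    have := (h1.add h2).const_mul (1 / s)
    have heq : (1 / s) * (-((0:ℝ) + 1)⁻¹ + (1 / 2) * (((0:ℝ) + 1) ^ 2)⁻¹) = -(1 / (2 * s)) := by
      field_simp; ring
    rw [← heq]
    exact this
  have htop : Tendsto
      (fun x => (1 / s) * (-(Real.exp (s * x) + 1)⁻¹ + (1 / 2) * ((Real.exp (s * x) + 1) ^ 2)⁻¹))
      atTop (𝓝 0) := by
    have h0 : Tendsto (fun x : ℝ => Real.exp (s * x) + 1) atTop atTop :=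
      tendsto_atTop_add_const_right _ 1 exp_tendsto_top
    have h1 := (h0.inv_tendsto_atTop).neg
    have h2 := (((tendsto_pow_atTop (two_ne_zero (α := ℕ))).comp h0).inv_tendsto_atTop).const_mul (1 / (2:ℝ))
    have := (h1.add h2).const_mul (1 / s)
    simpa using this
  have := my_ftc hd hpos hbot htop
  refine ⟨this.1, ?_⟩
  rw [this.2]
  ring

lemma main_est (q : ℝ) (hq : 0 < q) :
    Integrable (fun x : ℝ => 2 * Real.sqrt 2 * (q * Real.exp (Real.sqrt 2 * x)) /
        (q * Real.exp (Real.sqrt 2 * x) + 1) ^ 2 * (2 / (Real.exp (Real.sqrt 2 * x) + 1)) ^ 3) ∧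
    |(∫ x : ℝ, 2 * Real.sqrt 2 * (q * Real.exp (Real.sqrt 2 * x)) /
        (q * Real.exp (Real.sqrt 2 * x) + 1) ^ 2 * (2 / (Real.exp (Real.sqrt 2 * x) + 1)) ^ 3)
      - 8 * q| ≤ 16 * q ^ 2 := by
  have hs := sqrt2_pos
  set s := Real.sqrt 2 with hs_def
  set f : ℝ → ℝ := fun x => 2 * s * (q * Real.exp (s * x)) /
      (q * Real.exp (s * x) + 1) ^ 2 * (2 / (Real.exp (s * x) + 1)) ^ 3 with hf_def
  set g : ℝ → ℝ := fun x => (16 * s * q) * (Real.exp (s * x) / (Real.exp (s * x) + 1) ^ 3)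
    with hg_def
  set h : ℝ → ℝ := fun x => (32 * s * q ^ 2) * (Real.exp (s * x) ^ 2 / (Real.exp (s * x) + 1) ^ 3)
    with hh_def
  -- basic positivity facts
  have hu : ∀ x : ℝ, 0 < Real.exp (s * x) := fun x => Real.exp_pos _
  have hne1 : ∀ x : ℝ, (0:ℝ) < Real.exp (s * x) + 1 := fun x => by positivity
  have hne2 : ∀ x : ℝ, (0:ℝ) < q * Real.exp (s * x) + 1 := fun x => by positivity
  -- f in canonical form
  have hfcan : ∀ x : ℝ, f x = (16 * s * q) * (Real.exp (s * x) / (Real.exp (s * x) + 1) ^ 3)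
      * ((q * Real.exp (s * x) + 1) ^ 2)⁻¹ := by
    intro x
    simp only [hf_def]
    rw [div_pow]
    field_simp
    ring
  -- key pointwise bounds
  have hkey : ∀ x : ℝ, 0 ≤ f x ∧ f x ≤ g x ∧ g x - f x ≤ h x := by
    intro x
    have hu' := hu x
    have h1 := hne1 x
    have h2 := hne2 x
    set u := Real.exp (s * x)
    set w := q * u with hw_def
    have hw0 : 0 ≤ w := by positivity
    have hw2 : (0:ℝ) < (w + 1) ^ 2 := by positivity
    have hbase : (0:ℝ) ≤ (16 * s * q) * (u / (u + 1) ^ 3) := by positivity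
    have hinv1 : ((w + 1) ^ 2)⁻¹ ≤ 1 := by
      rw [inv_le_one_iff₀]
      right; nlinarith
    have hinv2 : 1 - ((w + 1) ^ 2)⁻¹ ≤ 2 * w := by
      have : 1 - 2 * w ≤ 1 / (w + 1) ^ 2 := by
        rw [le_div_iff₀ hw2]
        nlinarith [hw0, sq_nonneg w, mul_nonneg hw0 (sq_nonneg w)]
      rw [one_div] at this
      linarith
    refine ⟨?_, ?_, ?_⟩
    · rw [hfcan x]; positivity
    · simp only [hfcan x, hg_def]
      calc (16 * s * q) * (u / (u + 1) ^ 3) * ((w + 1) ^ 2)⁻¹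
          ≤ (16 * s * q) * (u / (u + 1) ^ 3) * 1 :=
            mul_le_mul_of_nonneg_left hinv1 hbase
        _ = (16 * s * q) * (u / (u + 1) ^ 3) := by ring
    · simp only [hfcan x, hg_def, hh_def]
      have e1 : (16 * s * q) * (u / (u + 1) ^ 3)
          - (16 * s * q) * (u / (u + 1) ^ 3) * ((w + 1) ^ 2)⁻¹
          = (16 * s * q) * (u / (u + 1) ^ 3) * (1 - ((w + 1) ^ 2)⁻¹) := by ring
      have e2 : (16 * s * q) * (u / (u + 1) ^ 3) * (2 * w)
          = (32 * s * q ^ 2) * (u ^ 2 / (u + 1) ^ 3) := by rw [hw_def]; ring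
      rw [e1, ← e2]
      exact mul_le_mul_of_nonneg_left hinv2 hbase
  -- integrability and integrals of g and h
  have hint_g : Integrable g := base1_integral.1.const_mul (16 * s * q)
  have hint_h : Integrable h := base2_integral.1.const_mul (32 * s * q ^ 2)
  have hig : ∫ x, g x = 8 * q := by
    simp only [hg_def]
    rw [integral_const_mul, base1_integral.2]
    field_simp
    ring
  have hih : ∫ x, h x = 16 * q ^ 2 := by
    simp only [hh_def]
    rw [integral_const_mul, base2_integral.2]
    field_simp
    ring
  -- integrability of f
  have hcont : Continuous f := by
    rw [hf_def]
    apply Continuous.mul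
    · apply Continuous.div
      · fun_prop
      · fun_prop
      · intro x; exact ne_of_gt (by positivity)
    · apply Continuous.pow
      apply Continuous.div continuous_const
      · fun_prop
      · intro x; exact ne_of_gt (hne1 x)
  have hint_f : Integrable f := by
    refine hint_g.mono' hcont.aestronglyMeasurable ?_
    exact Filter.Eventually.of_forall fun x => by
      rw [Real.norm_eq_abs, abs_of_nonneg (hkey x).1]
      exact (hkey x).2.1
  refine ⟨hint_f, ?_⟩
  rw [← hig, ← integral_sub hint_f hint_g]
  calc |∫ x, (f x - g x)| ≤ ∫ x, |f x - g x| := by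
        simpa [Real.norm_eq_abs] using norm_integral_le_integral_norm (fun x => f x - g x)
    _ ≤ ∫ x, h x := by
        refine integral_mono (hint_f.sub hint_g).abs hint_h fun x => ?_
        rw [abs_sub_comm, abs_of_nonneg (sub_nonneg.2 (hkey x).2.1)]
        exact (hkey x).2.2
    _ = 16 * q ^ 2 := hih

/-- The interaction integral `∫ ω'(x−η)(1−ω(x))³ dx = 8e^{−√2 η} + O(e^{−2√2 η})`. -/
theorem interaction_integral : ∃ C : ℝ, 0 < C ∧
    ∀ η : ℝ, 1 ≤ η →
      |(∫ x : ℝ, deriv ω (x - η) * (1 - ω x) ^ 3) - 8 * Real.exp (-(Real.sqrt 2) * η)|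
        ≤ C * Real.exp (-(2 * Real.sqrt 2) * η) := by
  refine ⟨16, by norm_num, fun η _ => ?_⟩
  have hs := sqrt2_pos
  set s := Real.sqrt 2 with hs_def
  set q := Real.exp (-s * η) with hq_def
  have hq : 0 < q := Real.exp_pos _
  have hfeq : (fun x : ℝ => deriv ω (x - η) * (1 - ω x) ^ 3)
      = fun x : ℝ => 2 * s * (q * Real.exp (s * x)) / (q * Real.exp (s * x) + 1) ^ 2
        * (2 / (Real.exp (s * x) + 1)) ^ 3 := by
    funext x
    have hxe : Real.exp (s * (x - η)) = q * Real.exp (s * x) := by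
      rw [hq_def, ← Real.exp_add]; congr 1; ring
    rw [(omega_hasDeriv (x - η)).deriv, omega_eq x, hxe]
    ring
  have hq2 : q ^ 2 = Real.exp (-(2 * s) * η) := by
    rw [hq_def, sq, ← Real.exp_add]; congr 1; ring
  rw [hfeq, ← hq2]
  exact (main_est q hq).2
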